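/- Let (M,d) be a nonempty metric space equipped with its Borel σ-algebra and let μ be a Borel probability measure on M such that every sphere is μ-null, i.e. μ({v ∈ M : d(u,v) = r}) = 0 for all u ∈ M and all r ≥ 0. Then for every u ∈ M and all real numbers τ₁, τ₂ with 0 ≤ τ₁ < τ₂ ≤ 1, the local metric quantile regions are strictly nested: q̄(u,τ₁) ⊆ q̄(u,τ₂), and there exists v ∈ M with τ₁ < F_μ(u,v) ≤ τ₂, so that q̄(u,τ₁) ≠ q̄(u,τ₂). -/

import Mathlib

open MeasureTheory Metric ENNReal

section Aux

variable {M : Type*} [MetricSpace M] [MeasurableSpace M] [BorelSpace M]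
  (μ : Measure M) [IsProbabilityMeasure μ]

private lemma g_mono (u : M) {r s : ℝ} (h : r ≤ s) :
    (μ (closedBall u r)).toReal ≤ (μ (closedBall u s)).toReal :=
  ENNReal.toReal_mono (measure_ne_top μ _)
    (measure_mono (closedBall_subset_closedBall h))

/-- Left bound: if `g r ≤ t` for all `r < c`, and spheres are null, then `g c ≤ t`. -/
private lemma g_left (u : M)
    (hsph : ∀ (u : M) (r : ℝ), 0 ≤ r → μ {v | dist u v = r} = 0)
    {c t : ℝ} (hc : 0 ≤ c) (ht : 0 ≤ t)
    (h : ∀ r, r < c → (μ (closedBall u r)).toReal ≤ t) :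
    (μ (closedBall u c)).toReal ≤ t := by
  have hball : μ (ball u c) ≤ ENNReal.ofReal t := by
    have hU : ball u c = ⋃ n : ℕ, closedBall u (c - 1 / (n + 1)) := by
      ext v
      simp only [mem_ball, Set.mem_iUnion, mem_closedBall]
      constructor
      · intro hv
        obtain ⟨n, hn⟩ := exists_nat_one_div_lt (sub_pos.2 hv)
        exact ⟨n, by push_cast at hn ⊢; linarith⟩
      · rintro ⟨n, hn⟩
        have hpos : (0 : ℝ) < 1 / (n + 1) := by positivity
        linarith
    have hmono : Monotone fun n : ℕ => closedBall u (c - 1 / (n + 1)) := by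
      intro m n hmn
      refine closedBall_subset_closedBall (by
        have h1 : (1 : ℝ) / (n + 1) ≤ 1 / (m + 1) := by
          apply one_div_le_one_div_of_le (by positivity)
          exact_mod_cast by omega
        linarith)
    rw [hU, hmono.measure_iUnion]
    refine iSup_le fun n => ?_
    have := h (c - 1 / (n + 1)) (by
      have hpos : (0 : ℝ) < 1 / (n + 1) := by positivity
      linarith)
    exact ENNReal.le_ofReal_iff_toReal_le (measure_ne_top μ _) ht |>.2 this
  have hsub : closedBall u c ⊆ ball u c ∪ {v | dist u v = c} := by
    intro v hv
    rcases lt_or_eq_of_le (mem_closedBall.1 hv) with h' | h'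
    · exact Or.inl (mem_ball.2 h')
    · exact Or.inr (by simpa [dist_comm] using h')
  have hle : μ (closedBall u c) ≤ ENNReal.ofReal t :=
    calc μ (closedBall u c) ≤ μ (ball u c) + μ {v | dist u v = c} :=
          le_trans (measure_mono hsub) (measure_union_le _ _)
      _ ≤ ENNReal.ofReal t + 0 := by
          rw [hsph u c hc]; exact add_le_add hball le_rfl
      _ = ENNReal.ofReal t := by simp
  exact ENNReal.toReal_le_of_le_ofReal ht hle

/-- Right bound: if `t ≤ g r` for all `r > c`, then `t ≤ g c`. -/
private lemma g_right (u : M) {c t : ℝ} (ht : 0 ≤ t)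
    (h : ∀ r, c < r → t ≤ (μ (closedBall u r)).toReal) :
    t ≤ (μ (closedBall u c)).toReal := by
  have hI : closedBall u c = ⋂ n : ℕ, closedBall u (c + 1 / (n + 1)) := by
    ext v
    simp only [mem_closedBall, Set.mem_iInter]
    constructor
    · intro hv n
      have hpos : (0 : ℝ) < 1 / (n + 1) := by positivity
      linarith
    · intro hv
      by_contra hlt
      push_neg at hlt
      obtain ⟨n, hn⟩ := exists_nat_one_div_lt (sub_pos.2 hlt)
      have := hv n
      push_cast at hn this
      linarith
  have key : ∀ m n : ℕ, m ≤ n → (1 : ℝ) / (n + 1) ≤ 1 / (m + 1) := by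
    intro m n hmn
    apply one_div_le_one_div_of_le (by positivity)
    exact_mod_cast by omega
  have hdir : Directed (· ⊇ ·) fun n : ℕ => closedBall u (c + 1 / (n + 1)) := by
    intro m n
    exact ⟨max m n, closedBall_subset_closedBall (by linarith [key m (max m n) (le_max_left m n)]),
      closedBall_subset_closedBall (by linarith [key n (max m n) (le_max_right m n)])⟩
  have hmeas : ∀ n : ℕ, NullMeasurableSet (closedBall u (c + 1 / (n + 1))) μ :=
    fun n => measurableSet_closedBall.nullMeasurableSet
  have hfin : ∃ n : ℕ, μ (closedBall u (c + 1 / (n + 1))) ≠ ∞ :=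
    ⟨0, measure_ne_top μ _⟩
  have hle : ENNReal.ofReal t ≤ μ (closedBall u c) := by
    rw [hI, hdir.measure_iInter hmeas hfin]
    refine le_iInf fun n => ?_
    have hpos : (0 : ℝ) < 1 / ((n : ℝ) + 1) := by positivity
    exact ENNReal.ofReal_le_of_le_toReal (h _ (by linarith))
  calc t = (ENNReal.ofReal t).toReal := (ENNReal.toReal_ofReal ht).symm
    _ ≤ (μ (closedBall u c)).toReal := ENNReal.toReal_mono (measure_ne_top μ _) hle

end Aux

/-- Strict nestedness of the local metric quantile regions
`q̄(u,τ) = {v | F_μ(u,v) ≤ τ}`, where `F_μ(u,v) = μ(closedBall u (dist u v))` is the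
metric distribution function, under the assumption that all spheres are `μ`-null. -/
theorem local_quantile_regions_strictly_nested
    {M : Type*} [MetricSpace M] [Nonempty M] [MeasurableSpace M] [BorelSpace M]
    (μ : Measure M) [IsProbabilityMeasure μ]
    (hsph : ∀ (u : M) (r : ℝ), 0 ≤ r → μ {v | dist u v = r} = 0)
    (u : M) (τ₁ τ₂ : ℝ) (h0 : 0 ≤ τ₁) (h12 : τ₁ < τ₂) (h21 : τ₂ ≤ 1) :
    {v : M | (μ (closedBall u (dist u v))).toReal ≤ τ₁} ⊆
      {v : M | (μ (closedBall u (dist u v))).toReal ≤ τ₂} ∧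
    (∃ v : M, τ₁ < (μ (closedBall u (dist u v))).toReal ∧
      (μ (closedBall u (dist u v))).toReal ≤ τ₂) ∧
    {v : M | (μ (closedBall u (dist u v))).toReal ≤ τ₁} ≠
      {v : M | (μ (closedBall u (dist u v))).toReal ≤ τ₂} := by
  set g : ℝ → ℝ := fun r => (μ (closedBall u r)).toReal with hg
  -- g 0 = 0
  have hg0 : g 0 = 0 := by
    have h1 : closedBall u (0 : ℝ) = {v | dist u v = 0} := by
      ext v; simp [dist_comm, eq_comm, le_antisymm_iff, dist_nonneg]
    have hμ : μ (closedBall u (0 : ℝ)) = 0 := by rw [h1]; exact hsph u 0 le_rfl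
    show (μ (closedBall u (0 : ℝ))).toReal = 0
    rw [hμ, ENNReal.toReal_zero]
  -- g is eventually > τ₁
  have hex : ∃ N : ℝ, 0 ≤ N ∧ τ₁ < g N := by
    have hU : (Set.univ : Set M) = ⋃ n : ℕ, closedBall u n := by
      ext v
      simp only [Set.mem_univ, Set.mem_iUnion, mem_closedBall, true_iff]
      obtain ⟨n, hn⟩ := exists_nat_gt (dist v u)
      exact ⟨n, hn.le⟩
    have hmono : Monotone fun n : ℕ => closedBall u (n : ℝ) := fun m n hmn =>
      closedBall_subset_closedBall (by exact_mod_cast hmn)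
    have h1 : (1 : ℝ≥0∞) = ⨆ n : ℕ, μ (closedBall u n) := by
      rw [← hmono.measure_iUnion, ← hU, measure_univ]
    have hlt : ENNReal.ofReal τ₁ < ⨆ n : ℕ, μ (closedBall u n) := by
      rw [← h1]
      exact ENNReal.ofReal_lt_one.2 (lt_of_lt_of_le h12 h21)
    obtain ⟨n, hn⟩ := lt_iSup_iff.1 hlt
    refine ⟨n, Nat.cast_nonneg n, ?_⟩
    have := ENNReal.toReal_mono (measure_ne_top μ _) hn.le
    rw [ENNReal.toReal_ofReal h0] at this
    rcases this.lt_or_eq with h' | h'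
    · exact h'
    · exfalso
      have : μ (closedBall u n) = ENNReal.ofReal τ₁ := by
        rw [← ENNReal.ofReal_toReal (measure_ne_top μ (closedBall u (n : ℝ))), ← h']
      exact absurd (this ▸ hn) (lt_irrefl _)
  obtain ⟨N, hN0, hNτ⟩ := hex
  -- the sup of the sublevel set
  set S : Set ℝ := {r | g r ≤ τ₁} with hS
  have hS0 : (0 : ℝ) ∈ S := by simp [hS, hg0, h0]
  have hSbdd : BddAbove S := by
    refine ⟨N, fun r hr => ?_⟩
    by_contra hlt
    push_neg at hlt
    exact absurd (le_trans (g_mono μ u hlt.le) hr) (not_le.2 hNτ)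
  set a : ℝ := sSup S with ha
  have ha0 : 0 ≤ a := le_csSup hSbdd hS0
  have haS : ∀ r, r < a → g r ≤ τ₁ := by
    intro r hr
    obtain ⟨s, hsS, hrs⟩ := exists_lt_of_lt_csSup ⟨0, hS0⟩ hr
    exact le_trans (g_mono μ u hrs.le) hsS
  have hga : g a ≤ τ₁ := g_left μ u hsph ha0 h0 haS
  have hgt : ∀ r, a < r → τ₁ < g r := by
    intro r hr
    by_contra hle
    push_neg at hle
    exact absurd (le_csSup hSbdd (by exact hle : r ∈ S)) (not_le.2 hr)
  -- nesting
  have hsubset : {v : M | (μ (closedBall u (dist u v))).toReal ≤ τ₁} ⊆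
      {v : M | (μ (closedBall u (dist u v))).toReal ≤ τ₂} :=
    fun v hv => le_trans hv h12.le
  -- find the witness v
  have hwit : ∃ v : M, τ₁ < g (dist u v) ∧ g (dist u v) ≤ τ₂ := by
    by_cases hcase : ∃ r : ℝ, τ₂ < g r
    · -- Case A
      obtain ⟨r₀, hr₀⟩ := hcase
      set T : Set ℝ := {r | τ₂ < g r} with hT
      have hTne : T.Nonempty := ⟨r₀, hr₀⟩
      have hTbdd : BddBelow T := by
        refine ⟨0, fun r hr => ?_⟩
        by_contra hlt
        push_neg at hlt
        have : closedBall u r = ∅ := closedBall_eq_empty.2 hlt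
        have : g r = 0 := by simp [hg, this]
        have : τ₂ < 0 := this ▸ hr
        linarith
      set b : ℝ := sInf T with hb
      have hb0 : 0 ≤ b := le_csInf hTne fun r hr => by
        by_contra hlt
        push_neg at hlt
        have he : closedBall u r = ∅ := closedBall_eq_empty.2 hlt
        have : g r = 0 := by simp [hg, he]
        have : τ₂ < 0 := this ▸ hr
        linarith
      have hgb_le : g b ≤ τ₂ := by
        refine g_left μ u hsph hb0 (le_trans h0 h12.le) fun r hr => ?_
        by_contra hle
        push_neg at hle
        exact absurd (csInf_le hTbdd (by exact hle : r ∈ T)) (not_le.2 hr)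
      have hgb_ge : τ₂ ≤ g b := by
        refine g_right μ u (le_trans h0 h12.le) fun r hr => ?_
        obtain ⟨s, hsT, hsr⟩ := csInf_lt_iff hTbdd hTne |>.1 hr
        exact le_trans (le_of_lt hsT) (g_mono μ u hsr.le)
      have hab : a < b := by
        by_contra hle
        push_neg at hle
        have := le_trans hgb_ge (le_trans (g_mono μ u hle) hga)
        linarith
      -- annulus
      have hsub' : closedBall u a ⊆ closedBall u b := closedBall_subset_closedBall hab.le
      have hdiff : μ (closedBall u b \ closedBall u a)
          = μ (closedBall u b) - μ (closedBall u a) :=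
        measure_diff hsub' measurableSet_closedBall.nullMeasurableSet (measure_ne_top μ _)
      have hpos : μ (closedBall u b \ closedBall u a) ≠ 0 := by
        rw [hdiff]
        intro h0'
        have hle' : μ (closedBall u b) ≤ μ (closedBall u a) := by
          rwa [tsub_eq_zero_iff_le] at h0'
        have := ENNReal.toReal_mono (measure_ne_top μ _) hle'
        have : g b ≤ g a := this
        linarith
      obtain ⟨v, hv⟩ := nonempty_of_measure_ne_zero hpos
      obtain ⟨hvb, hva⟩ := hv
      have hdva : a < dist u v := by
        by_contra hle
        push_neg at hle
        exact hva (mem_closedBall.2 (by rwa [dist_comm]))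
      have hdvb : dist u v ≤ b := by rw [dist_comm]; exact mem_closedBall.1 hvb
      exact ⟨v, hgt _ hdva, le_trans (g_mono μ u hdvb) hgb_le⟩
    · -- Case B: g ≤ τ₂ everywhere
      push_neg at hcase
      have hpos : μ (closedBall u a)ᶜ ≠ 0 := by
        rw [measure_compl measurableSet_closedBall (measure_ne_top μ _), measure_univ]
        intro h0'
        have : μ (closedBall u a) = 1 := by
          have h1 : μ (closedBall u a) ≤ 1 := prob_le_one
          rw [tsub_eq_zero_iff_le] at h0'
          exact le_antisymm h1 h0'
        have : g a = 1 := by simp [hg, this]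
        linarith
      obtain ⟨v, hv⟩ := nonempty_of_measure_ne_zero hpos
      have hdva : a < dist u v := by
        by_contra hle
        push_neg at hle
        exact hv (mem_closedBall.2 (by rwa [dist_comm]))
      exact ⟨v, hgt _ hdva, hcase _⟩
  obtain ⟨v, hv1, hv2⟩ := hwit
  refine ⟨hsubset, ⟨v, hv1, hv2⟩, fun heq => ?_⟩
  have hv_mem : v ∈ {v : M | (μ (closedBall u (dist u v))).toReal ≤ τ₂} := hv2
  rw [← heq] at hv_mem
  exact absurd hv_mem (not_le.2 hv1)
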